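/- (Corollary 3, conditional form.) Let σ₁ ∈ [−1, 1] and σ₂ ∈ [−1, 0] satisfy the index condition: either (σ₁ − σ₂/2 ≤ 1 and σ₂ > −1) or (σ₁ < 1/2 and σ₂ = −1). Let u₀, B₀ ∈ L²(ℝ³; ℝ³) with ‖B₀‖_{𝒴^{σ₂}} < ∞, and let (u, B) : [0,∞) → L²(ℝ³;ℝ³) × L²(ℝ³;ℝ³) satisfy the Fourier Duhamel identity B̂(t,ξ) = e^{−t|ξ|²} B̂₀(ξ) + ∫₀^t e^{−(t−τ)|ξ|²} ( iξ × F[u×B](τ,ξ) − iξ × ( iξ · F[B⊗B](τ,ξ) ) ) dτ for all t ≥ 0 and a.e. ξ, together with the decay bound ‖u(t)‖²_{L²} + ‖B(t)‖²_{L²} ≤ K (1+t)^{−3/2 + σ₁} for all t > 0 and some K > 0 (with σ₁ ≥ σ₂). Then sup_{t ≥ 0} ‖B(t)‖_{𝒴^{σ₂}} < ∞. -/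

import Mathlib

open MeasureTheory Real
open scoped FourierTransform

noncomputable section

/-- Componentwise Fourier transform of a vector field `g : ℝ³ → ℝ³`,
viewed as a `ℂ³`-valued function of the frequency `ξ`. -/
def ftv (g : EuclideanSpace ℝ (Fin 3) → EuclideanSpace ℝ (Fin 3))
    (ξ : EuclideanSpace ℝ (Fin 3)) : EuclideanSpace ℂ (Fin 3) :=
  (EuclideanSpace.equiv (Fin 3) ℂ).symm fun i => 𝓕 (fun x => ((g x i : ℝ) : ℂ)) ξ

/-- Cross product on `ℂ³`. -/
def crossC (a b : Fin 3 → ℂ) : Fin 3 → ℂ :=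
  ![a 1 * b 2 - a 2 * b 1, a 2 * b 0 - a 0 * b 2, a 0 * b 1 - a 1 * b 0]

/-- Cross product of two vectors of `ℝ³`. -/
def crossR (a b : EuclideanSpace ℝ (Fin 3)) : Fin 3 → ℝ :=
  ![a 1 * b 2 - a 2 * b 1, a 2 * b 0 - a 0 * b 2, a 0 * b 1 - a 1 * b 0]

/-- The vector `iξ` of `ℂ³` associated to a frequency `ξ ∈ ℝ³`. -/
def iXi (ξ : EuclideanSpace ℝ (Fin 3)) : Fin 3 → ℂ :=
  fun j => Complex.I * (ξ j : ℂ)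

/-- The vector `iξ · F[v⊗w](ξ)`, with `k`-th component `∑_j iξ_j 𝓕(v_j w_k)(ξ)`. -/
def divTensor (v w : EuclideanSpace ℝ (Fin 3) → EuclideanSpace ℝ (Fin 3))
    (ξ : EuclideanSpace ℝ (Fin 3)) : Fin 3 → ℂ :=
  fun k => ∑ j, Complex.I * (ξ j : ℂ) *
    𝓕 (fun x => ((v x j : ℝ) : ℂ) * ((w x k : ℝ) : ℂ)) ξ

/-- The Fourier transform `F[v×w](ξ)` of the cross product of two vector fields. -/
def ftCross (v w : EuclideanSpace ℝ (Fin 3) → EuclideanSpace ℝ (Fin 3))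
    (ξ : EuclideanSpace ℝ (Fin 3)) : Fin 3 → ℂ :=
  fun j => 𝓕 (fun x => ((crossR (v x) (w x) j : ℝ) : ℂ)) ξ


/-- `x ^ θ ≤ e^x` for `0 ≤ θ ≤ 1`, `x ≥ 0`. -/
lemma rpow_le_exp_aux {x θ : ℝ} (hx : 0 ≤ x) (h0 : 0 ≤ θ) (h1 : θ ≤ 1) :
    x ^ θ ≤ Real.exp x := by
  rcases le_total x 1 with h | h
  · exact (Real.rpow_le_one hx h h0).trans (by nlinarith [Real.add_one_le_exp x])
  · calc x ^ θ ≤ x ^ (1:ℝ) := Real.rpow_le_rpow_of_exponent_le h h1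
      _ = x := Real.rpow_one x
      _ ≤ Real.exp x := by nlinarith [Real.add_one_le_exp x]

/-- `e^{-s r²} r^a ≤ s^{-a/2}` for `s > 0`, `0 ≤ a ≤ 2`. -/
lemma exp_mul_rpow_le {s r a : ℝ} (hs : 0 < s) (hr : 0 ≤ r) (ha : 0 ≤ a) (ha2 : a ≤ 2) :
    Real.exp (-(s * r ^ 2)) * r ^ a ≤ s ^ (-(a/2)) := by
  have hX : (0:ℝ) ≤ s * r ^ 2 := by positivity
  have h2 : (s * r ^ 2) ^ (a/2) ≤ Real.exp (s * r ^ 2) :=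
    rpow_le_exp_aux hX (by linarith) (by linarith)
  have h1 : (s * r ^ 2) ^ (a/2) = s ^ (a/2) * r ^ a := by
    rw [Real.mul_rpow hs.le (by positivity)]
    congr 1
    rw [← Real.rpow_natCast r 2, ← Real.rpow_mul hr]
    ring_nf
  have hsp : (0:ℝ) < s ^ (a/2) := Real.rpow_pos_of_pos hs _
  rw [Real.rpow_neg hs.le, Real.exp_neg]
  rw [inv_mul_le_iff₀ (Real.exp_pos _)]
  rw [← div_eq_mul_inv, le_div_iff₀ hsp]
  calc r ^ a * s ^ (a/2) = s ^ (a/2) * r ^ a := by ring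
    _ ≤ Real.exp (s * r ^ 2) := h1 ▸ h2


/-- The kernel integrand. -/
def ker (t r a c τ : ℝ) : ℝ := Real.exp (-((t - τ) * r ^ 2)) * r ^ a * (1 + τ) ^ c

lemma ker_nonneg {t r a c : ℝ} (hr : 0 ≤ r) {τ : ℝ} (hτ : 0 ≤ τ) : 0 ≤ ker t r a c τ := by
  unfold ker
  have h1 : (0:ℝ) ≤ r ^ a := Real.rpow_nonneg hr a
  have h2 : (0:ℝ) ≤ (1 + τ) ^ c := Real.rpow_nonneg (by linarith) c
  positivity

lemma contOn_ker {t r a c : ℝ} : ContinuousOn (ker t r a c) (Set.Ici (0:ℝ)) := by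
  unfold ker
  apply ContinuousOn.mul
  · exact (((continuous_const.sub continuous_id).mul continuous_const).neg.rexp.mul
      continuous_const).continuousOn
  · refine ContinuousOn.rpow_const ?_ ?_
    · exact (continuous_const.add continuous_id).continuousOn
    · intro τ hτ
      have h0 : (0:ℝ) ≤ τ := hτ
      exact Or.inl (by intro h; linarith)

lemma intInt_ker {t r a c x y : ℝ} (hx : 0 ≤ x) (hy : 0 ≤ y) :
    IntervalIntegrable (ker t r a c) volume x y :=
  (contOn_ker.mono (by
    rcases le_total x y with h | h
    · rw [Set.uIcc_of_le h]; exact fun z hz => le_trans hx hz.1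
    · rw [Set.uIcc_of_ge h]; exact fun z hz => le_trans hy hz.1)).intervalIntegrable

/-- `∫₀^T (1+τ)^c dτ` closed form. -/
lemma integral_one_add_rpow {T c : ℝ} (hT : 0 ≤ T) (hc : c ≠ -1) :
    ∫ τ in (0:ℝ)..T, (1 + τ) ^ c = ((1 + T) ^ (c + 1) - 1) / (c + 1) := by
  have h0 : (0:ℝ) ∉ Set.uIcc 1 (1 + T) := by
    rw [Set.uIcc_of_le (by linarith)]
    intro h; exact absurd h.1 (by norm_num)
  have := intervalIntegral.integral_comp_add_left (a := 0) (b := T) (fun x => x ^ c) 1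
  rw [this, integral_rpow (Or.inr ⟨hc, by simpa using h0⟩)]
  norm_num [Real.one_rpow]

lemma intInt_one_add_rpow {T c : ℝ} (hT : 0 ≤ T) :
    IntervalIntegrable (fun τ => (1 + τ) ^ c) volume 0 T := by
  have : ContinuousOn (fun τ : ℝ => (1 + τ) ^ c) (Set.uIcc 0 T) := by
    refine ContinuousOn.rpow_const (continuous_const.add continuous_id).continuousOn ?_
    intro τ hτ
    rw [Set.uIcc_of_le hT] at hτ
    exact Or.inl (by intro h; linarith [hτ.1])
  exact this.intervalIntegrable

/-- `∫_s^t (t-τ)^e dτ` closed form, `e > -1`. -/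
lemma integral_sub_rpow {s t e : ℝ} (hst : s ≤ t) (he : -1 < e) :
    ∫ τ in s..t, (t - τ) ^ e = (t - s) ^ (e + 1) / (e + 1) := by
  have := intervalIntegral.integral_comp_sub_left (a := s) (b := t) (fun x => x ^ e) t
  rw [this, sub_self, integral_rpow (Or.inl he), Real.zero_rpow (by linarith)]
  ring

lemma intInt_sub_rpow {s t e : ℝ} (he : -1 < e) :
    IntervalIntegrable (fun τ => (t - τ) ^ e) volume s t := by
  have h := (intervalIntegral.intervalIntegrable_rpow' (a := 0) (b := t - s) he).comp_sub_left t
  simpa using h.symm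

lemma exp_kernel_le_one {t τ r : ℝ} (hτ : τ ≤ t) : Real.exp (-((t - τ) * r ^ 2)) ≤ 1 := by
  rw [Real.exp_le_one_iff]
  have : 0 ≤ (t - τ) * r ^ 2 := mul_nonneg (by linarith) (sq_nonneg r)
  linarith

lemma kernel_zero {c : ℝ} (hc : c < -1) :
    ∃ C : ℝ, 0 ≤ C ∧ ∀ t r : ℝ, 0 ≤ t → 0 ≤ r →
      (∫ τ in (0:ℝ)..t, ker t r 0 c τ) ≤ C := by
  have hd : c + 1 < 0 := by linarith
  have hC0 : (0:ℝ) ≤ -1 / (c + 1) := by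
    apply div_nonneg_of_nonpos <;> linarith
  refine ⟨-1 / (c + 1), hC0, fun t r ht hr => ?_⟩
  have h1 : (∫ τ in (0:ℝ)..t, ker t r 0 c τ) ≤ ∫ τ in (0:ℝ)..t, (1 + τ) ^ c := by
    refine intervalIntegral.integral_mono_on ht (intInt_ker le_rfl ht)
      (intInt_one_add_rpow ht) fun τ hτ => ?_
    have h2 : (0:ℝ) ≤ (1 + τ) ^ c := Real.rpow_nonneg (by linarith [hτ.1]) c
    have h3 : Real.exp (-((t - τ) * r ^ 2)) ≤ 1 := exp_kernel_le_one hτ.2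
    have h4 : (0:ℝ) < Real.exp (-((t - τ) * r ^ 2)) := Real.exp_pos _
    unfold ker
    rw [Real.rpow_zero]
    nlinarith
  rw [integral_one_add_rpow ht (by linarith)] at h1
  have h5 : (0:ℝ) ≤ (1 + t) ^ (c + 1) := Real.rpow_nonneg (by linarith) _
  have h6 : ((1 + t) ^ (c + 1) - 1) / (c + 1) ≤ -1 / (c + 1) := by
    rw [div_le_div_right_of_neg hd]
    nlinarith
  linarith

lemma integral_exp_kernel (s t r : ℝ) :
    ∫ τ in s..t, Real.exp (-((t - τ) * r ^ 2)) * r ^ 2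
      = 1 - Real.exp (-((t - s) * r ^ 2)) := by
  have hd : ∀ τ ∈ Set.uIcc s t,
      HasDerivAt (fun y => Real.exp (-((t - y) * r ^ 2)))
        (Real.exp (-((t - τ) * r ^ 2)) * r ^ 2) τ := by
    intro τ _
    have h1 : HasDerivAt (fun y : ℝ => -((t - y) * r ^ 2)) (r ^ 2) τ := by
      refine (((hasDerivAt_id τ).const_sub t).mul_const (r ^ 2)).neg.congr_deriv ?_
      ring
    simpa [mul_comm] using h1.exp
  have hcont : IntervalIntegrable
      (fun τ => Real.exp (-((t - τ) * r ^ 2)) * r ^ 2) volume s t :=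
    ((((continuous_const.sub continuous_id).mul continuous_const).neg.rexp.mul
      continuous_const)).intervalIntegrable s t
  have h := intervalIntegral.integral_eq_sub_of_hasDerivAt hd hcont
  simpa using h

lemma ker_le_exp_sq {t r c : ℝ} (hr : 0 ≤ r) {τ : ℝ} (hτ0 : 0 ≤ τ) (hc : c ≤ 0) :
    ker t r 2 c τ ≤ Real.exp (-((t - τ) * r ^ 2)) * r ^ 2 := by
  unfold ker
  have h1 : (1 + τ) ^ c ≤ 1 := Real.rpow_le_one_of_one_le_of_nonpos (by linarith) hc
  have h2 : (0:ℝ) ≤ (1 + τ) ^ c := Real.rpow_nonneg (by linarith) c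
  have h3 : r ^ (2:ℝ) = r ^ 2 := by
    rw [← Real.rpow_natCast r 2]; norm_num
  rw [h3]
  have h4 : (0:ℝ) ≤ Real.exp (-((t - τ) * r ^ 2)) * r ^ 2 := by positivity
  nlinarith

lemma kernel_two {c : ℝ} (hc : c ≤ -(1/2)) :
    ∃ C : ℝ, 0 ≤ C ∧ ∀ t r : ℝ, 0 ≤ t → 0 ≤ r →
      (∫ τ in (0:ℝ)..t, ker t r 2 c τ) ≤ C := by
  refine ⟨6, by norm_num, fun t r ht hr => ?_⟩
  have hc0 : c ≤ 0 := by linarith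
  have hint_exp : ∀ s : ℝ, (∫ τ in s..t, Real.exp (-((t - τ) * r ^ 2)) * r ^ 2) ≤ 1 := by
    intro s
    rw [integral_exp_kernel]
    have := Real.exp_pos (-((t - s) * r ^ 2))
    linarith
  have hii_exp : ∀ s y : ℝ, IntervalIntegrable
      (fun τ => Real.exp (-((t - τ) * r ^ 2)) * r ^ 2) volume s y := fun s y =>
    ((((continuous_const.sub continuous_id).mul continuous_const).neg.rexp.mul
      continuous_const)).intervalIntegrable s y
  rcases le_or_gt t 2 with ht2 | ht2
  · -- small time
    have h1 : (∫ τ in (0:ℝ)..t, ker t r 2 c τ)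
        ≤ ∫ τ in (0:ℝ)..t, Real.exp (-((t - τ) * r ^ 2)) * r ^ 2 :=
      intervalIntegral.integral_mono_on ht (intInt_ker le_rfl ht) (hii_exp 0 t)
        (fun τ hτ => ker_le_exp_sq hr hτ.1 hc0)
    linarith [hint_exp 0]
  · -- large time
    have hth : (1:ℝ) ≤ t/2 := by linarith
    have hth0 : (0:ℝ) < t/2 := by linarith
    have hsplit : (∫ τ in (0:ℝ)..(t/2), ker t r 2 c τ) + (∫ τ in (t/2)..t, ker t r 2 c τ)
        = ∫ τ in (0:ℝ)..t, ker t r 2 c τ :=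
      intervalIntegral.integral_add_adjacent_intervals
        (intInt_ker le_rfl (by linarith)) (intInt_ker (by linarith) ht)
    -- Part B
    have hB : (∫ τ in (t/2)..t, ker t r 2 c τ) ≤ 1 := by
      refine le_trans (intervalIntegral.integral_mono_on (by linarith)
        (intInt_ker (by linarith) ht) (hii_exp (t/2) t)
        (fun τ hτ => ker_le_exp_sq hr (by linarith [hτ.1]) hc0)) (hint_exp (t/2))
    -- Part A
    have hA : (∫ τ in (0:ℝ)..(t/2), ker t r 2 c τ) ≤ 4 := by
      have hmono : ∀ τ ∈ Set.Icc (0:ℝ) (t/2), ker t r 2 c τ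
          ≤ (t/2) ^ (-(1:ℝ)) * (1 + τ) ^ (-(1/2) : ℝ) := by
        intro τ hτ
        unfold ker
        have e1 : Real.exp (-((t - τ) * r ^ 2)) ≤ Real.exp (-((t/2) * r ^ 2)) := by
          apply Real.exp_le_exp.mpr
          have : t/2 * r^2 ≤ (t - τ) * r^2 :=
            mul_le_mul_of_nonneg_right (by linarith [hτ.2]) (sq_nonneg r)
          linarith
        have e2 : Real.exp (-((t/2) * r ^ 2)) * r ^ (2:ℝ) ≤ (t/2) ^ (-(1:ℝ)) := by
          have := exp_mul_rpow_le (s := t/2) (r := r) (a := 2) hth0 hr (by norm_num) le_rfl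
          convert this using 2
          norm_num
        have e3 : (1 + τ) ^ c ≤ (1 + τ) ^ (-(1/2):ℝ) :=
          Real.rpow_le_rpow_of_exponent_le (by linarith [hτ.1]) hc
        have e4 : (0:ℝ) ≤ (1 + τ) ^ c := Real.rpow_nonneg (by linarith [hτ.1]) c
        have e5 : (0:ℝ) ≤ r ^ (2:ℝ) := Real.rpow_nonneg hr _
        have e6 : (0:ℝ) < Real.exp (-((t - τ) * r ^ 2)) := Real.exp_pos _
        have e7 : (0:ℝ) < Real.exp (-((t/2) * r ^ 2)) := Real.exp_pos _
        have e8 : (0:ℝ) ≤ (1 + τ) ^ (-(1/2):ℝ) := Real.rpow_nonneg (by linarith [hτ.1]) _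
        have e9 : (0:ℝ) ≤ (t/2) ^ (-(1:ℝ)) := Real.rpow_nonneg (by linarith) _
        exact mul_le_mul (le_trans (mul_le_mul_of_nonneg_right e1 e5) e2) e3 e4 e9
      have hint : (∫ τ in (0:ℝ)..(t/2), ker t r 2 c τ)
          ≤ ∫ τ in (0:ℝ)..(t/2), (t/2) ^ (-(1:ℝ)) * (1 + τ) ^ (-(1/2):ℝ) := by
        refine intervalIntegral.integral_mono_on (by linarith)
          (intInt_ker le_rfl (by linarith))
          ((intInt_one_add_rpow (by linarith)).const_mul _) hmono
      rw [intervalIntegral.integral_const_mul,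
        integral_one_add_rpow (by linarith) (by norm_num)] at hint
      have hval : (t/2) ^ (-(1:ℝ)) * (((1 + t/2) ^ ((-(1/2):ℝ) + 1) - 1) / ((-(1/2):ℝ) + 1)) ≤ 4 := by
        have k1 : (1 + t/2) ^ ((1:ℝ)/2) ≤ 2 * (t/2) ^ ((1:ℝ)/2) := by
          have k2 : (1 + t/2) ^ ((1:ℝ)/2) ≤ (2 * (t/2)) ^ ((1:ℝ)/2) :=
            Real.rpow_le_rpow (by linarith) (by linarith) (by norm_num)
          have k3 : ((2:ℝ) * (t/2)) ^ ((1:ℝ)/2) = 2 ^ ((1:ℝ)/2) * (t/2) ^ ((1:ℝ)/2) :=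
            Real.mul_rpow (by norm_num) (by linarith)
          have k4 : (2:ℝ) ^ ((1:ℝ)/2) ≤ 2 := by
            calc (2:ℝ) ^ ((1:ℝ)/2) ≤ 2 ^ (1:ℝ) := by
                  apply Real.rpow_le_rpow_of_exponent_le one_le_two; norm_num
              _ = 2 := Real.rpow_one 2
          have k5 : (0:ℝ) ≤ (t/2) ^ ((1:ℝ)/2) := Real.rpow_nonneg (by linarith) _
          nlinarith
        have k6 : (t/2) ^ (-(1:ℝ)) * (t/2) ^ ((1:ℝ)/2) ≤ 1 := by
          rw [← Real.rpow_add hth0]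
          apply Real.rpow_le_one_of_one_le_of_nonpos hth
          norm_num
        have k7 : (0:ℝ) ≤ (t/2) ^ (-(1:ℝ)) := Real.rpow_nonneg (by linarith) _
        have k8 : (0:ℝ) ≤ (1 + t/2) ^ ((1:ℝ)/2) := Real.rpow_nonneg (by linarith) _
        have k9 : ((-(1/2):ℝ) + 1) = (1:ℝ)/2 := by norm_num
        rw [k9]
        have k10 : ((1 + t/2) ^ ((1:ℝ)/2) - 1) / ((1:ℝ)/2)
            = 2 * ((1 + t/2) ^ ((1:ℝ)/2) - 1) := by ring
        rw [k10]
        nlinarith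
      linarith
    linarith [hsplit ▸ add_le_add hA hB]

lemma ker_int_le {t r a c s D : ℝ} (hr : 0 ≤ r) (ha : 0 < a) (ha2 : a < 2) (h0s : 0 ≤ s)
    (hst : s ≤ t) (hDb : ∀ τ ∈ Set.Ioo s t, (1 + τ) ^ c ≤ D) :
    (∫ τ in s..t, ker t r a c τ) ≤ (t - s) ^ (1 - a/2) / (1 - a/2) * D := by
  have he : (-1:ℝ) < -(a/2) := by linarith
  rw [intervalIntegral.integral_of_le hst, integral_Ioc_eq_integral_Ioo]
  have step : (∫ τ in Set.Ioo s t, ker t r a c τ)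
      ≤ ∫ τ in Set.Ioo s t, ((t - τ) ^ (-(a/2)) * D) := by
    refine setIntegral_mono_on ?_ ?_ measurableSet_Ioo ?_
    · exact ((intervalIntegrable_iff_integrableOn_Ioc_of_le hst).mp
        (intInt_ker h0s (le_trans h0s hst))).mono_set Set.Ioo_subset_Ioc_self
    · exact ((intervalIntegrable_iff_integrableOn_Ioc_of_le hst).mp
        ((intInt_sub_rpow he).mul_const D)).mono_set Set.Ioo_subset_Ioc_self
    · intro τ hτ
      unfold ker
      have p1 : Real.exp (-((t - τ) * r ^ 2)) * r ^ a ≤ (t - τ) ^ (-(a/2)) :=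
        exp_mul_rpow_le (by linarith [hτ.2]) hr ha.le ha2.le
      have p2 : (1 + τ) ^ c ≤ D := hDb τ hτ
      have p3 : (0:ℝ) ≤ (1 + τ) ^ c := Real.rpow_nonneg (by linarith [h0s.trans hτ.1.le]) c
      have p4 : (0:ℝ) ≤ (t - τ) ^ (-(a/2)) := Real.rpow_nonneg (by linarith [hτ.2]) _
      exact mul_le_mul p1 p2 p3 p4
  refine step.trans (le_of_eq ?_)
  rw [← integral_Ioc_eq_integral_Ioo, ← intervalIntegral.integral_of_le hst,
    intervalIntegral.integral_mul_const, integral_sub_rpow hst he]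
  have : -(a/2) + 1 = 1 - a/2 := by ring
  rw [this]

lemma kernel_mid {a c : ℝ} (ha : 0 < a) (ha2 : a < 2) (hc : c ≤ -(1/2)) (hac : c ≤ a/2 - 1) :
    ∃ C : ℝ, 0 ≤ C ∧ ∀ t r : ℝ, 0 ≤ t → 0 ≤ r →
      (∫ τ in (0:ℝ)..t, ker t r a c τ) ≤ C := by
  set c' := max c (a/4 - 1) with hc'def
  have hc'1 : -1 < c' := lt_of_lt_of_le (by linarith) (le_max_right _ _)
  have hc'2 : c' ≤ a/2 - 1 := max_le hac (by linarith)
  have hc'c : c ≤ c' := le_max_left _ _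
  have hc'0 : c' ≤ 0 := by linarith
  have hd1 : (0:ℝ) < c' + 1 := by linarith
  have hd2 : (0:ℝ) < 1 - a/2 := by linarith
  have hC1 : (0:ℝ) ≤ 2 ^ ((1:ℝ) - a/2) / (1 - a/2) :=
    div_nonneg (Real.rpow_nonneg (by norm_num) _) hd2.le
  refine ⟨2 ^ ((1:ℝ) - a/2) / (1 - a/2) + (2/(c'+1) + 1/(1-a/2)),
    by positivity, fun t r ht hr => ?_⟩
  rcases le_or_gt t 2 with ht2 | ht2
  · -- small time
    have h1 : (∫ τ in (0:ℝ)..t, ker t r a c τ) ≤ (t - 0) ^ (1 - a/2) / (1 - a/2) * 1 := by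
      refine ker_int_le hr ha ha2 le_rfl ht fun τ hτ => ?_
      exact Real.rpow_le_one_of_one_le_of_nonpos (by linarith [hτ.1]) (by linarith)
    have h2 : (t - 0) ^ (1 - a/2) ≤ 2 ^ ((1:ℝ) - a/2) := by
      rw [sub_zero]
      exact Real.rpow_le_rpow ht ht2 hd2.le
    have h3 : (t - 0) ^ (1 - a/2) / (1 - a/2) * 1 ≤ 2 ^ ((1:ℝ) - a/2) / (1 - a/2) := by
      rw [mul_one]
      exact by gcongr
    have h4 : (0:ℝ) < 2/(c'+1) + 1/(1-a/2) := by positivity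
    linarith
  · -- large time
    have hth : (1:ℝ) ≤ t/2 := by linarith
    have hth0 : (0:ℝ) < t/2 := by linarith
    have hsplit : (∫ τ in (0:ℝ)..(t/2), ker t r a c τ) + (∫ τ in (t/2)..t, ker t r a c τ)
        = ∫ τ in (0:ℝ)..t, ker t r a c τ :=
      intervalIntegral.integral_add_adjacent_intervals
        (intInt_ker le_rfl (by linarith)) (intInt_ker (by linarith) ht)
    -- Part B
    have hB : (∫ τ in (t/2)..t, ker t r a c τ) ≤ 1/(1-a/2) := by
      have h1 : (∫ τ in (t/2)..t, ker t r a c τ)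
          ≤ (t - t/2) ^ (1 - a/2) / (1 - a/2) * ((t/2) ^ c) := by
        refine ker_int_le hr ha ha2 (by linarith) (by linarith) fun τ hτ => ?_
        exact Real.rpow_le_rpow_of_nonpos hth0 (by linarith [hτ.1]) (by linarith)
      have h2 : t - t/2 = t/2 := by ring
      rw [h2] at h1
      have h3 : (t/2) ^ (1 - a/2) / (1 - a/2) * ((t/2) ^ c)
          = (t/2) ^ ((1 - a/2) + c) / (1 - a/2) := by
        rw [Real.rpow_add hth0]; ring
      rw [h3] at h1
      have h4 : (t/2) ^ ((1 - a/2) + c) ≤ 1 :=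
        Real.rpow_le_one_of_one_le_of_nonpos hth (by linarith)
      have h5 : (t/2) ^ ((1 - a/2) + c) / (1 - a/2) ≤ 1 / (1-a/2) :=
        by gcongr
      linarith
    -- Part A
    have hA : (∫ τ in (0:ℝ)..(t/2), ker t r a c τ) ≤ 2/(c'+1) := by
      have hmono : ∀ τ ∈ Set.Icc (0:ℝ) (t/2), ker t r a c τ
          ≤ (t/2) ^ (-(a/2)) * (1 + τ) ^ c' := by
        intro τ hτ
        unfold ker
        have e1 : Real.exp (-((t - τ) * r ^ 2)) ≤ Real.exp (-((t/2) * r ^ 2)) := by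
          apply Real.exp_le_exp.mpr
          have : t/2 * r^2 ≤ (t - τ) * r^2 :=
            mul_le_mul_of_nonneg_right (by linarith [hτ.2]) (sq_nonneg r)
          linarith
        have e2 : Real.exp (-((t/2) * r ^ 2)) * r ^ a ≤ (t/2) ^ (-(a/2)) :=
          exp_mul_rpow_le hth0 hr ha.le ha2.le
        have e3 : (1 + τ) ^ c ≤ (1 + τ) ^ c' :=
          Real.rpow_le_rpow_of_exponent_le (by linarith [hτ.1]) hc'c
        have e4 : (0:ℝ) ≤ (1 + τ) ^ c := Real.rpow_nonneg (by linarith [hτ.1]) c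
        have e5 : (0:ℝ) ≤ r ^ a := Real.rpow_nonneg hr _
        have e9 : (0:ℝ) ≤ (t/2) ^ (-(a/2)) := Real.rpow_nonneg (by linarith) _
        exact mul_le_mul (le_trans (mul_le_mul_of_nonneg_right e1 e5) e2) e3 e4 e9
      have hint : (∫ τ in (0:ℝ)..(t/2), ker t r a c τ)
          ≤ ∫ τ in (0:ℝ)..(t/2), (t/2) ^ (-(a/2)) * (1 + τ) ^ c' := by
        refine intervalIntegral.integral_mono_on (by linarith)
          (intInt_ker le_rfl (by linarith))
          ((intInt_one_add_rpow (by linarith)).const_mul _) hmono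
      rw [intervalIntegral.integral_const_mul,
        integral_one_add_rpow (by linarith) (by linarith)] at hint
      have hval : (t/2) ^ (-(a/2)) * (((1 + t/2) ^ (c'+1) - 1) / (c'+1)) ≤ 2/(c'+1) := by
        have k1 : (1 + t/2) ^ (c'+1) ≤ 2 * (t/2) ^ (c'+1) := by
          have k2 : (1 + t/2) ^ (c'+1) ≤ (2 * (t/2)) ^ (c'+1) :=
            Real.rpow_le_rpow (by linarith) (by linarith) hd1.le
          have k3 : ((2:ℝ) * (t/2)) ^ (c'+1) = 2 ^ (c'+1) * (t/2) ^ (c'+1) :=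
            Real.mul_rpow (by norm_num) (by linarith)
          have k4 : (2:ℝ) ^ (c'+1) ≤ 2 := by
            calc (2:ℝ) ^ (c'+1) ≤ 2 ^ (1:ℝ) :=
                  Real.rpow_le_rpow_of_exponent_le one_le_two (by linarith)
              _ = 2 := Real.rpow_one 2
          have k5 : (0:ℝ) ≤ (t/2) ^ (c'+1) := Real.rpow_nonneg (by linarith) _
          nlinarith
        have k6 : (t/2) ^ (-(a/2)) * (t/2) ^ (c'+1) ≤ 1 := by
          rw [← Real.rpow_add hth0]
          exact Real.rpow_le_one_of_one_le_of_nonpos hth (by linarith)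
        have k7 : (0:ℝ) ≤ (t/2) ^ (-(a/2)) := Real.rpow_nonneg (by linarith) _
        have k8 : (0:ℝ) ≤ (t/2) ^ (c'+1) := Real.rpow_nonneg (by linarith) _
        have k10 : (t/2) ^ (-(a/2)) * (((1 + t/2) ^ (c'+1) - 1) / (c'+1))
            = ((t/2) ^ (-(a/2)) * ((1 + t/2) ^ (c'+1) - 1)) / (c'+1) := by ring
        rw [k10]
        have k11 : (t/2) ^ (-(a/2)) * ((1 + t/2) ^ (c'+1) - 1) ≤ 2 := by nlinarith
        exact by gcongr
      linarith
    linarith [hsplit ▸ add_le_add hA hB]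


abbrev E3 := EuclideanSpace ℝ (Fin 3)

lemma euclid_coord_le {𝕜 : Type*} [RCLike 𝕜] {n : Type*} [Fintype n]
    (x : EuclideanSpace 𝕜 n) (i : n) : ‖x i‖ ≤ ‖x‖ := by
  rw [EuclideanSpace.norm_eq]
  have h1 : ‖x i‖ ^ 2 ≤ ∑ j, ‖x j‖ ^ 2 :=
    Finset.single_le_sum (fun j _ => sq_nonneg ‖x j‖) (Finset.mem_univ i)
  calc ‖x i‖ = Real.sqrt (‖x i‖ ^ 2) := (Real.sqrt_sq (norm_nonneg _)).symm
    _ ≤ Real.sqrt (∑ j, ‖x j‖ ^ 2) := Real.sqrt_le_sqrt h1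

lemma euclid_norm_le_two_mul {x : EuclideanSpace ℂ (Fin 3)} {m : ℝ}
    (h : ∀ i, ‖x i‖ ≤ m) : ‖x‖ ≤ 2 * m := by
  have hm : 0 ≤ m := le_trans (norm_nonneg _) (h 0)
  rw [EuclideanSpace.norm_eq]
  have h1 : ∑ i, ‖x i‖ ^ 2 ≤ (2*m)^2 := by
    have : ∀ i : Fin 3, ‖x i‖^2 ≤ m^2 := fun i => by nlinarith [h i, norm_nonneg (x i)]
    calc ∑ i, ‖x i‖ ^ 2 ≤ ∑ _i : Fin 3, m^2 := Finset.sum_le_sum fun i _ => this i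
      _ = 3 * m^2 := by simp [Finset.sum_const]
      _ ≤ (2*m)^2 := by nlinarith
  calc Real.sqrt (∑ i, ‖x i‖ ^ 2) ≤ Real.sqrt ((2*m)^2) := Real.sqrt_le_sqrt h1
    _ = 2*m := Real.sqrt_sq (by linarith)

lemma memL2_coord {v : E3 → E3} (hv : MemLp v 2 volume) (i : Fin 3) :
    MemLp (fun x => v x i) 2 volume :=
  (EuclideanSpace.proj (𝕜 := ℝ) i).comp_memLp' hv

lemma integrable_normsq {v : E3 → E3} (hv : MemLp v 2 volume) :
    Integrable (fun x => ‖v x‖ ^ 2) volume := hv.norm.integrable_sq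

lemma integral_normsq_nonneg (v : E3 → E3) : 0 ≤ ∫ x : E3, ‖v x‖ ^ 2 :=
  integral_nonneg fun x => sq_nonneg _

/-- L¹-type bound for a product of coordinates. -/
lemma integral_prod_coord_le {v w : E3 → E3} (hv : MemLp v 2 volume)
    (hw : MemLp w 2 volume) (a b : Fin 3) :
    (∫ x : E3, ‖((v x a : ℝ) : ℂ) * ((w x b : ℝ) : ℂ)‖)
      ≤ ((∫ x : E3, ‖v x‖ ^ 2) + (∫ x : E3, ‖w x‖ ^ 2)) / 2 := by
  have hmaj : Integrable (fun x => (‖v x‖^2 + ‖w x‖^2)/2) volume :=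
    ((integrable_normsq hv).add (integrable_normsq hw)).div_const 2
  have hb : ∀ x : E3, ‖((v x a : ℝ) : ℂ) * ((w x b : ℝ) : ℂ)‖ ≤ (‖v x‖^2 + ‖w x‖^2)/2 := by
    intro x
    rw [norm_mul, Complex.norm_real, Complex.norm_real]
    have h1 : ‖v x a‖ ≤ ‖v x‖ := euclid_coord_le (x := v x) a
    have h2 : ‖w x b‖ ≤ ‖w x‖ := euclid_coord_le (x := w x) b
    have h3 : 0 ≤ ‖v x a‖ := norm_nonneg _
    have h4 : 0 ≤ ‖w x b‖ := norm_nonneg _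
    nlinarith [norm_nonneg (v x), norm_nonneg (w x), sq_nonneg (‖v x a‖ - ‖w x b‖),
      mul_le_mul h1 h2 h4 (norm_nonneg (v x)), sq_nonneg (‖v x‖ - ‖w x‖)]
  calc (∫ x : E3, ‖((v x a : ℝ) : ℂ) * ((w x b : ℝ) : ℂ)‖)
      ≤ ∫ x : E3, (‖v x‖^2 + ‖w x‖^2)/2 :=
        integral_mono_of_nonneg (Filter.Eventually.of_forall fun x => norm_nonneg _)
          hmaj (Filter.Eventually.of_forall hb)
    _ = ((∫ x : E3, ‖v x‖ ^ 2) + (∫ x : E3, ‖w x‖ ^ 2)) / 2 := by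
        rw [integral_div, integral_add (integrable_normsq hv) (integrable_normsq hw)]

/-- The basic uniform bound on a Fourier integral. -/
lemma norm_fourier_le (f : E3 → ℂ) (ξ : E3) : ‖𝓕 f ξ‖ ≤ ∫ x : E3, ‖f x‖ :=
  VectorFourier.norm_fourierIntegral_le_integral_norm _ _ _ f ξ

lemma ftv_apply (g : E3 → E3) (ξ : E3) (i : Fin 3) :
    ftv g ξ i = 𝓕 (fun x => ((g x i : ℝ) : ℂ)) ξ := rfl

/-- Bound on `F[v×w]`. -/
lemma ftCross_norm_le {v w : E3 → E3} (hv : MemLp v 2 volume) (hw : MemLp w 2 volume)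
    (ξ : E3) (j : Fin 3) :
    ‖ftCross v w ξ j‖ ≤ (∫ x : E3, ‖v x‖ ^ 2) + (∫ x : E3, ‖w x‖ ^ 2) := by
  set X := ∫ x : E3, ‖v x‖ ^ 2
  set Y := ∫ x : E3, ‖w x‖ ^ 2
  have key : ∀ a b c d : Fin 3,
      ‖𝓕 (fun x => ((v x a * w x b - v x c * w x d : ℝ) : ℂ)) ξ‖ ≤ X + Y := by
    intro a b c d
    refine (norm_fourier_le _ ξ).trans ?_
    have hmaj : Integrable (fun x => (‖v x‖^2 + ‖w x‖^2)) volume :=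
      (integrable_normsq hv).add (integrable_normsq hw)
    have hb : ∀ x : E3, ‖((v x a * w x b - v x c * w x d : ℝ) : ℂ)‖
        ≤ ‖v x‖^2 + ‖w x‖^2 := by
      intro x
      rw [Complex.norm_real]
      have h1 : ‖v x a‖ ≤ ‖v x‖ := euclid_coord_le (x := v x) a
      have h2 : ‖w x b‖ ≤ ‖w x‖ := euclid_coord_le (x := w x) b
      have h3 : ‖v x c‖ ≤ ‖v x‖ := euclid_coord_le (x := v x) c
      have h4 : ‖w x d‖ ≤ ‖w x‖ := euclid_coord_le (x := w x) d
      have h5 : ‖(v x a * w x b - v x c * w x d : ℝ)‖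
          ≤ ‖v x a‖ * ‖w x b‖ + ‖v x c‖ * ‖w x d‖ := by
        rw [Real.norm_eq_abs]
        refine (abs_sub _ _).trans ?_
        rw [abs_mul, abs_mul]
        simp [Real.norm_eq_abs]
      refine h5.trans ?_
      nlinarith [norm_nonneg (v x a), norm_nonneg (w x b), norm_nonneg (v x c),
        norm_nonneg (w x d), norm_nonneg (v x), norm_nonneg (w x),
        mul_le_mul h1 h2 (norm_nonneg _) (norm_nonneg _),
        mul_le_mul h3 h4 (norm_nonneg _) (norm_nonneg _),
        sq_nonneg (‖v x‖ - ‖w x‖)]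
    calc (∫ x : E3, ‖((v x a * w x b - v x c * w x d : ℝ) : ℂ)‖)
        ≤ ∫ x : E3, (‖v x‖^2 + ‖w x‖^2) :=
          integral_mono_of_nonneg (Filter.Eventually.of_forall fun x => norm_nonneg _)
            hmaj (Filter.Eventually.of_forall hb)
      _ = X + Y := integral_add (integrable_normsq hv) (integrable_normsq hw)
  fin_cases j <;> simpa [ftCross, crossR] using key _ _ _ _

/-- Bound on the Fourier transform of a coordinate product. -/
lemma fourier_prod_norm_le {v w : E3 → E3} (hv : MemLp v 2 volume) (hw : MemLp w 2 volume)
    (ξ : E3) (j k : Fin 3) :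
    ‖𝓕 (fun x => ((v x j : ℝ) : ℂ) * ((w x k : ℝ) : ℂ)) ξ‖
      ≤ ((∫ x : E3, ‖v x‖ ^ 2) + (∫ x : E3, ‖w x‖ ^ 2)) / 2 :=
  (norm_fourier_le _ ξ).trans (integral_prod_coord_le hv hw j k)

lemma iXi_norm_le (ξ : E3) (j : Fin 3) : ‖iXi ξ j‖ ≤ ‖ξ‖ := by
  unfold iXi
  rw [norm_mul, Complex.norm_I, one_mul, Complex.norm_real]
  exact euclid_coord_le (x := ξ) j

lemma divTensor_norm_le {v w : E3 → E3} (hv : MemLp v 2 volume) (hw : MemLp w 2 volume)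
    (ξ : E3) (k : Fin 3) :
    ‖divTensor v w ξ k‖
      ≤ 3 * (‖ξ‖ * (((∫ x : E3, ‖v x‖ ^ 2) + (∫ x : E3, ‖w x‖ ^ 2)) / 2)) := by
  unfold divTensor
  refine (norm_sum_le _ _).trans ?_
  have hterm : ∀ j : Fin 3, ‖Complex.I * (ξ j : ℂ) *
      𝓕 (fun x => ((v x j : ℝ) : ℂ) * ((w x k : ℝ) : ℂ)) ξ‖
      ≤ ‖ξ‖ * (((∫ x : E3, ‖v x‖ ^ 2) + (∫ x : E3, ‖w x‖ ^ 2)) / 2) := by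
    intro j
    rw [norm_mul, norm_mul, Complex.norm_I, one_mul, Complex.norm_real]
    have h1 : ‖ξ j‖ ≤ ‖ξ‖ := euclid_coord_le (x := ξ) j
    have h2 := fourier_prod_norm_le hv hw ξ j k
    have h3 : (0:ℝ) ≤ ((∫ x : E3, ‖v x‖ ^ 2) + (∫ x : E3, ‖w x‖ ^ 2)) / 2 := by
      have := integral_normsq_nonneg v; have := integral_normsq_nonneg w; linarith
    exact mul_le_mul h1 h2 (norm_nonneg _) (norm_nonneg _) |>.trans
      (le_of_eq rfl)
  calc (∑ j, ‖Complex.I * (ξ j : ℂ) *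
        𝓕 (fun x => ((v x j : ℝ) : ℂ) * ((w x k : ℝ) : ℂ)) ξ‖)
      ≤ ∑ _j : Fin 3, ‖ξ‖ * (((∫ x : E3, ‖v x‖ ^ 2) + (∫ x : E3, ‖w x‖ ^ 2)) / 2) :=
        Finset.sum_le_sum fun j _ => hterm j
    _ = 3 * (‖ξ‖ * (((∫ x : E3, ‖v x‖ ^ 2) + (∫ x : E3, ‖w x‖ ^ 2)) / 2)) := by
        simp [Finset.sum_const]

lemma crossC_norm_le {a b : Fin 3 → ℂ} {ma mb : ℝ}
    (ha : ∀ i, ‖a i‖ ≤ ma) (hb : ∀ i, ‖b i‖ ≤ mb) (i : Fin 3) :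
    ‖crossC a b i‖ ≤ 2 * (ma * mb) := by
  have hma : 0 ≤ ma := le_trans (norm_nonneg _) (ha 0)
  have hmb : 0 ≤ mb := le_trans (norm_nonneg _) (hb 0)
  have key : ∀ p q s t : Fin 3, ‖a p * b q - a s * b t‖ ≤ 2 * (ma * mb) := by
    intro p q s t
    refine (norm_sub_le _ _).trans ?_
    rw [norm_mul, norm_mul]
    have h1 := mul_le_mul (ha p) (hb q) (norm_nonneg _) hma
    have h2 := mul_le_mul (ha s) (hb t) (norm_nonneg _) hma
    linarith
  fin_cases i <;> simpa [crossC] using key _ _ _ _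

lemma ftv_continuous (g : E3 → E3) : Continuous (ftv g) := by
  unfold ftv
  refine Continuous.comp (EuclideanSpace.equiv (Fin 3) ℂ).symm.continuous
    (continuous_pi fun i => ?_)
  by_cases h : Integrable (fun x => ((g x i : ℝ) : ℂ)) volume
  · exact VectorFourier.fourierIntegral_continuous Real.continuous_fourierChar
      (by exact continuous_inner) h
  · have hz : (fun ξ : E3 => 𝓕 (fun x => ((g x i : ℝ) : ℂ)) ξ) = fun _ => 0 := by
      funext ξ
      rw [Real.fourier_eq]
      refine integral_undef ?_
      rw [Real.fourierIntegral_convergent_iff]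
      exact h
    rw [hz]
    exact continuous_const

lemma ae_bound_to_forall {φ : E3 → ℝ} {C : ℝ}
    (hφ : ∀ᵐ ξ : E3, φ ξ ≤ C) (x₀ : E3) (hcont : ContinuousAt φ x₀) : φ x₀ ≤ C := by
  set S := {ξ : E3 | φ ξ ≤ C} with hS
  have hSc : volume {ξ : E3 | ¬ φ ξ ≤ C} = 0 := hφ
  have hd : Dense S := by
    rw [dense_iff_inter_open]
    intro U hU hUne
    by_contra hcon
    rw [Set.not_nonempty_iff_eq_empty] at hcon
    have hsub : U ⊆ {ξ : E3 | ¬ φ ξ ≤ C} := by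
      intro x hx
      by_contra hx2
      simp only [Set.mem_setOf_eq, not_not] at hx2
      have : x ∈ U ∩ S := ⟨hx, hx2⟩
      rw [hcon] at this
      exact Set.notMem_empty x this
    exact hUne.ne_empty (hU.eq_empty_of_measure_zero (measure_mono_null hsub hSc))
  obtain ⟨seq, hmem, hlim⟩ := mem_closure_iff_seq_limit.mp (hd x₀)
  exact le_of_tendsto (hcont.tendsto.comp hlim) (Filter.Eventually.of_forall fun n => hmem n)

set_option maxHeartbeats 2000000 in
/-- Corollary 3, conditional form. Let `σ₁ ∈ [-1,1]` and
`σ₂ ∈ [-1,0]` satisfy the index condition: either `σ₁ - σ₂/2 ≤ 1` and `σ₂ > -1`,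
or `σ₁ < 1/2` and `σ₂ = -1`; assume also `σ₂ ≤ σ₁`. Let `u₀, B₀ ∈ L²(ℝ³;ℝ³)` with
`‖B₀‖_{𝒴^{σ₂}} < ∞`, and let `(u,B) : [0,∞) → L² × L²` satisfy the Fourier-side
Duhamel identity for `B` together with the decay bound
`‖u(t)‖²_{L²} + ‖B(t)‖²_{L²} ≤ K (1+t)^{-3/2+σ₁}` for all `t > 0`. Then
`sup_{t ≥ 0} ‖B(t)‖_{𝒴^{σ₂}} < ∞`. -/
theorem HallMHD_B_pseudomeasure_bound (σ₁ σ₂ : ℝ)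
    (hσ₁ : -1 ≤ σ₁ ∧ σ₁ ≤ 1) (hσ₂ : -1 ≤ σ₂ ∧ σ₂ ≤ 0) (hσ₂₁ : σ₂ ≤ σ₁)
    (hindex : (σ₁ - σ₂ / 2 ≤ 1 ∧ -1 < σ₂) ∨ (σ₁ < 1 / 2 ∧ σ₂ = -1))
    (u₀ B₀ : EuclideanSpace ℝ (Fin 3) → EuclideanSpace ℝ (Fin 3))
    (u B : ℝ → EuclideanSpace ℝ (Fin 3) → EuclideanSpace ℝ (Fin 3))
    (hL2u₀ : MemLp u₀ 2 volume) (hL2B₀ : MemLp B₀ 2 volume)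
    (M : ℝ) (hM : ∀ ξ : EuclideanSpace ℝ (Fin 3), ‖ξ‖ ^ σ₂ * ‖ftv B₀ ξ‖ ≤ M)
    (hL2u : ∀ t, 0 ≤ t → MemLp (u t) 2 volume)
    (hL2B : ∀ t, 0 ≤ t → MemLp (B t) 2 volume)
    (hduhamelB : ∀ t : ℝ, 0 ≤ t → ∀ᵐ ξ : EuclideanSpace ℝ (Fin 3), ∀ i : Fin 3,
      ftv (B t) ξ i
        = Complex.exp (-((t * ‖ξ‖ ^ 2 : ℝ) : ℂ)) * ftv B₀ ξ i
          + ∫ τ in (0:ℝ)..t, Complex.exp (-(((t - τ) * ‖ξ‖ ^ 2 : ℝ) : ℂ))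
              * (crossC (iXi ξ) (ftCross (u τ) (B τ) ξ) i
                  - crossC (iXi ξ) (divTensor (B τ) (B τ) ξ) i))
    (K : ℝ) (hK : 0 < K)
    (hdecay : ∀ t, 0 < t →
      (∫ x : EuclideanSpace ℝ (Fin 3), ‖u t x‖ ^ 2)
          + (∫ x : EuclideanSpace ℝ (Fin 3), ‖B t x‖ ^ 2)
        ≤ K * (1 + t) ^ (-(3 / 2) + σ₁)) :
    ∃ C : ℝ, ∀ t, 0 ≤ t → ∀ ξ : EuclideanSpace ℝ (Fin 3),
      ‖ξ‖ ^ σ₂ * ‖ftv (B t) ξ‖ ≤ C := by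
  classical
  -- decay exponent
  set c : ℝ := -(3/2) + σ₁ with hcdef
  have hc : c ≤ -(1/2) := by rw [hcdef]; linarith [hσ₁.2]
  -- kernel constants
  obtain ⟨C₁, hC₁0, hC₁⟩ : ∃ C₁ : ℝ, 0 ≤ C₁ ∧ ∀ t r : ℝ, 0 ≤ t → 0 ≤ r →
      (∫ τ in (0:ℝ)..t, ker t r (1+σ₂) c τ) ≤ C₁ := by
    rcases hindex with ⟨h1, h2⟩ | ⟨h1, h2⟩
    · exact kernel_mid (by linarith) (by linarith [hσ₂.2]) hc (by rw [hcdef]; linarith)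
    · have hz : (1:ℝ) + σ₂ = 0 := by rw [h2]; ring
      rw [hz]
      exact kernel_zero (by rw [hcdef]; linarith)
  obtain ⟨C₂, hC₂0, hC₂⟩ : ∃ C₂ : ℝ, 0 ≤ C₂ ∧ ∀ t r : ℝ, 0 ≤ t → 0 ≤ r →
      (∫ τ in (0:ℝ)..t, ker t r (2+σ₂) c τ) ≤ C₂ := by
    have hac : c ≤ (2+σ₂)/2 - 1 := by
      rcases hindex with ⟨h1, h2⟩ | ⟨h1, h2⟩
      · rw [hcdef]; linarith
      · rw [hcdef, h2]; linarith
    rcases lt_or_eq_of_le hσ₂.2 with h0 | h0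
    · exact kernel_mid (by linarith [hσ₂.1]) (by linarith) hc hac
    · have hz : (2:ℝ) + σ₂ = 2 := by rw [h0]; ring
      rw [hz]
      exact kernel_two hc
  have hM0 : 0 ≤ M :=
    le_trans (mul_nonneg (Real.rpow_nonneg (norm_nonneg _) _) (norm_nonneg _)) (hM 0)
  set m : ℝ := M + K * (2*C₁ + 6*C₂) with hmdef
  have hm0 : 0 ≤ m := by positivity
  refine ⟨2 * m, fun t ht ξ => ?_⟩
  -- the a.e. bound
  have hae : ∀ᵐ ξ' : EuclideanSpace ℝ (Fin 3),
      ‖ξ'‖ ^ σ₂ * ‖ftv (B t) ξ'‖ ≤ 2 * m := by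
    filter_upwards [hduhamelB t ht] with ξ' hDu
    set r : ℝ := ‖ξ'‖ with hrdef
    have hr : 0 ≤ r := norm_nonneg _
    have hrp : 0 ≤ r ^ σ₂ := Real.rpow_nonneg hr _
    have comp_bound : ∀ i : Fin 3, r ^ σ₂ * ‖ftv (B t) ξ' i‖ ≤ m := by
      intro i
      set f : ℝ → ℂ := fun τ => Complex.exp (-(((t - τ) * ‖ξ'‖ ^ 2 : ℝ) : ℂ))
          * (crossC (iXi ξ') (ftCross (u τ) (B τ) ξ') i
              - crossC (iXi ξ') (divTensor (B τ) (B τ) ξ') i) with hfdef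
      have hDui : ftv (B t) ξ' i
          = Complex.exp (-((t * ‖ξ'‖ ^ 2 : ℝ) : ℂ)) * ftv B₀ ξ' i
            + ∫ τ in (0:ℝ)..t, f τ := hDu i
      -- first term
      have ht1 : r ^ σ₂ * ‖Complex.exp (-((t * ‖ξ'‖ ^ 2 : ℝ) : ℂ)) * ftv B₀ ξ' i‖ ≤ M := by
        rw [norm_mul]
        have he : ‖Complex.exp (-((t * ‖ξ'‖ ^ 2 : ℝ) : ℂ))‖ ≤ 1 := by
          rw [Complex.norm_exp]
          simp only [Complex.neg_re, Complex.ofReal_re]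
          rw [Real.exp_le_one_iff]
          have : (0:ℝ) ≤ t * ‖ξ'‖ ^ 2 := mul_nonneg ht (sq_nonneg _)
          linarith
        have hcd : ‖ftv B₀ ξ' i‖ ≤ ‖ftv B₀ ξ'‖ := euclid_coord_le (ftv B₀ ξ') i
        calc r ^ σ₂ * (‖Complex.exp (-((t * ‖ξ'‖ ^ 2 : ℝ) : ℂ))‖ * ‖ftv B₀ ξ' i‖)
            ≤ r ^ σ₂ * (1 * ‖ftv B₀ ξ'‖) := by
              refine mul_le_mul_of_nonneg_left ?_ hrp
              exact mul_le_mul he hcd (norm_nonneg _) zero_le_one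
          _ = ‖ξ'‖ ^ σ₂ * ‖ftv B₀ ξ'‖ := by rw [one_mul]
          _ ≤ M := hM ξ'
      -- second term
      have ht2 : r ^ σ₂ * ‖∫ τ in (0:ℝ)..t, f τ‖ ≤ K * (2*C₁ + 6*C₂) := by
        by_cases hfi : IntervalIntegrable f volume 0 t
        · -- bound by the majorant
          set G : ℝ → ℝ := fun τ => ((2*r + 6*r^2) * K) * ker t r 0 c τ with hGdef
          have hGint : IntervalIntegrable G volume 0 t := (intInt_ker le_rfl ht).const_mul _
          have hstep1 : ‖∫ τ in (0:ℝ)..t, f τ‖ ≤ ∫ τ in Set.Ioc 0 t, ‖f τ‖ := by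
            have := intervalIntegral.norm_integral_le_integral_norm_uIoc (f := f)
              (a := (0:ℝ)) (b := t) (μ := volume)
            rwa [Set.uIoc_of_le ht] at this
          have hstep2 : (∫ τ in Set.Ioc 0 t, ‖f τ‖) ≤ ∫ τ in Set.Ioc 0 t, G τ := by
            refine setIntegral_mono_on
              ((intervalIntegrable_iff_integrableOn_Ioc_of_le ht).mp hfi.norm)
              ((intervalIntegrable_iff_integrableOn_Ioc_of_le ht).mp hGint)
              measurableSet_Ioc ?_
            intro τ hτ
            have hτ0 : 0 < τ := hτ.1
            have hXY := hdecay τ hτ0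
            have hX0 : 0 ≤ ∫ x : EuclideanSpace ℝ (Fin 3), ‖u τ x‖ ^ 2 :=
              integral_normsq_nonneg _
            have hY0 : 0 ≤ ∫ x : EuclideanSpace ℝ (Fin 3), ‖B τ x‖ ^ 2 :=
              integral_normsq_nonneg _
            set X := ∫ x : EuclideanSpace ℝ (Fin 3), ‖u τ x‖ ^ 2
            set Y := ∫ x : EuclideanSpace ℝ (Fin 3), ‖B τ x‖ ^ 2
            have hE : X + Y ≤ K * (1 + τ) ^ c := by rw [hcdef]; exact hXY
            have hE0 : 0 ≤ K * (1 + τ) ^ c :=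
              mul_nonneg hK.le (Real.rpow_nonneg (by linarith) _)
            -- bound the cross products
            have hcr1 : ‖crossC (iXi ξ') (ftCross (u τ) (B τ) ξ') i‖ ≤ 2 * (r * (X + Y)) :=
              crossC_norm_le (iXi_norm_le ξ') (ftCross_norm_le (hL2u τ hτ0.le) (hL2B τ hτ0.le) ξ') i
            have hcr2 : ‖crossC (iXi ξ') (divTensor (B τ) (B τ) ξ') i‖
                ≤ 2 * (r * (3 * (r * ((Y + Y) / 2)))) :=
              crossC_norm_le (iXi_norm_le ξ') (divTensor_norm_le (hL2B τ hτ0.le) (hL2B τ hτ0.le) ξ') i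
            have hexp : ‖Complex.exp (-(((t - τ) * ‖ξ'‖ ^ 2 : ℝ) : ℂ))‖
                = Real.exp (-((t - τ) * r ^ 2)) := by
              rw [Complex.norm_exp]
              simp only [Complex.neg_re, Complex.ofReal_re]
              try rw [hrdef]
            have hnf : ‖f τ‖ ≤ Real.exp (-((t - τ) * r ^ 2)) * ((2*r + 6*r^2) * (K * (1 + τ) ^ c)) := by
              rw [hfdef]
              simp only []
              rw [norm_mul, hexp]
              refine mul_le_mul_of_nonneg_left ?_ (Real.exp_nonneg _)
              refine (norm_sub_le _ _).trans ?_
              have e1 : ‖crossC (iXi ξ') (ftCross (u τ) (B τ) ξ') i‖ ≤ 2 * (r * (K * (1 + τ) ^ c)) := by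
                refine hcr1.trans ?_
                have : r * (X + Y) ≤ r * (K * (1 + τ) ^ c) :=
                  mul_le_mul_of_nonneg_left hE hr
                linarith
              have e2 : ‖crossC (iXi ξ') (divTensor (B τ) (B τ) ξ') i‖
                  ≤ 6 * r^2 * (K * (1 + τ) ^ c) := by
                refine hcr2.trans ?_
                have hYE : Y ≤ K * (1 + τ) ^ c := by linarith
                have : 2 * (r * (3 * (r * ((Y + Y) / 2)))) = 6 * r^2 * Y := by ring
                rw [this]
                have h6 : (0:ℝ) ≤ 6 * r^2 := by positivity
                exact mul_le_mul_of_nonneg_left hYE h6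
              nlinarith [e1, e2]
            refine hnf.trans (le_of_eq ?_)
            rw [hGdef]
            simp only [ker, Real.rpow_zero]
            ring
          have hstep3 : r ^ σ₂ * (∫ τ in Set.Ioc 0 t, G τ) ≤ K * (2*C₁ + 6*C₂) := by
            have hmove : r ^ σ₂ * (∫ τ in Set.Ioc 0 t, G τ)
                = ∫ τ in Set.Ioc 0 t, r ^ σ₂ * G τ := (integral_const_mul _ _).symm
            rw [hmove]
            set H : ℝ → ℝ := fun τ =>
              K * (2 * ker t r (1+σ₂) c τ + 6 * ker t r (2+σ₂) c τ) with hHdef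
            have hHint : IntervalIntegrable H volume 0 t := by
              apply IntervalIntegrable.const_mul
              exact ((intInt_ker le_rfl ht).const_mul 2).add ((intInt_ker le_rfl ht).const_mul 6)
            have hstep3a : (∫ τ in Set.Ioc 0 t, r ^ σ₂ * G τ) ≤ ∫ τ in Set.Ioc 0 t, H τ := by
              refine setIntegral_mono_on
                ((intervalIntegrable_iff_integrableOn_Ioc_of_le ht).mp (hGint.const_mul _))
                ((intervalIntegrable_iff_integrableOn_Ioc_of_le ht).mp hHint)
                measurableSet_Ioc ?_
              intro τ hτ
              have hτ0 : (0:ℝ) ≤ τ := hτ.1.le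
              have ha1 : r ^ σ₂ * r ≤ r ^ (1+σ₂) := by
                rcases hr.eq_or_lt with h | h
                · rw [← h]
                  simp only [mul_zero]
                  exact Real.rpow_nonneg le_rfl _
                · rw [Real.rpow_add h, Real.rpow_one]; ring_nf; exact le_rfl
              have ha2 : r ^ σ₂ * r ^ 2 ≤ r ^ ((2:ℝ)+σ₂) := by
                rcases hr.eq_or_lt with h | h
                · rw [← h]
                  have : (0:ℝ) ^ (2:ℕ) = 0 := by norm_num
                  rw [this, mul_zero]
                  exact Real.rpow_nonneg le_rfl _
                · rw [Real.rpow_add h]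
                  rw [show ((2:ℝ) = ((2:ℕ):ℝ)) by norm_num, Real.rpow_natCast]
                  ring_nf; exact le_rfl
              have hexp0 : (0:ℝ) ≤ Real.exp (-((t - τ) * r ^ 2)) := (Real.exp_pos _).le
              have hrp0 : (0:ℝ) ≤ (1 + τ) ^ c := Real.rpow_nonneg (by linarith) _
              rw [hGdef, hHdef]
              simp only [ker, Real.rpow_zero]
              have key : r ^ σ₂ * (2*r + 6*r^2) ≤ 2 * r ^ (1+σ₂) + 6 * r ^ ((2:ℝ)+σ₂) := by
                nlinarith [ha1, ha2]
              calc r ^ σ₂ * ((2*r + 6*r^2) * K * (Real.exp (-((t - τ) * r ^ 2)) * 1 * (1 + τ) ^ c))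
                  = (r ^ σ₂ * (2*r + 6*r^2)) * (K * (Real.exp (-((t - τ) * r ^ 2)) * (1 + τ) ^ c)) := by
                    ring
                _ ≤ (2 * r ^ (1+σ₂) + 6 * r ^ ((2:ℝ)+σ₂))
                      * (K * (Real.exp (-((t - τ) * r ^ 2)) * (1 + τ) ^ c)) := by
                    refine mul_le_mul_of_nonneg_right key ?_
                    positivity
                _ = K * (2 * (Real.exp (-((t - τ) * r ^ 2)) * r ^ (1+σ₂) * (1 + τ) ^ c)
                      + 6 * (Real.exp (-((t - τ) * r ^ 2)) * r ^ ((2:ℝ)+σ₂) * (1 + τ) ^ c)) := by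
                    ring
            have hstep3b : (∫ τ in Set.Ioc 0 t, H τ) ≤ K * (2*C₁ + 6*C₂) := by
              have : (∫ τ in Set.Ioc 0 t, H τ) = ∫ τ in (0:ℝ)..t, H τ :=
                (intervalIntegral.integral_of_le ht).symm
              rw [this, hHdef]
              have hlin : (∫ τ in (0:ℝ)..t, K * (2 * ker t r (1+σ₂) c τ + 6 * ker t r (2+σ₂) c τ))
                  = K * (2 * (∫ τ in (0:ℝ)..t, ker t r (1+σ₂) c τ)
                      + 6 * (∫ τ in (0:ℝ)..t, ker t r (2+σ₂) c τ)) := by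
                rw [intervalIntegral.integral_const_mul]
                rw [intervalIntegral.integral_add ((intInt_ker le_rfl ht).const_mul 2)
                  ((intInt_ker le_rfl ht).const_mul 6)]
                rw [intervalIntegral.integral_const_mul, intervalIntegral.integral_const_mul]
              rw [hlin]
              have b1 := hC₁ t r ht hr
              have b2 := hC₂ t r ht hr
              refine mul_le_mul_of_nonneg_left ?_ hK.le
              refine add_le_add ?_ ?_
              · exact mul_le_mul_of_nonneg_left b1 (by norm_num)
              · exact mul_le_mul_of_nonneg_left b2 (by norm_num)
            exact hstep3a.trans hstep3b
          calc r ^ σ₂ * ‖∫ τ in (0:ℝ)..t, f τ‖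
              ≤ r ^ σ₂ * (∫ τ in Set.Ioc 0 t, G τ) := by
                refine mul_le_mul_of_nonneg_left (hstep1.trans hstep2) hrp
            _ ≤ K * (2*C₁ + 6*C₂) := hstep3
        · rw [intervalIntegral.integral_undef hfi]
          rw [norm_zero, mul_zero]
          have : (0:ℝ) ≤ 2*C₁ + 6*C₂ := by linarith
          exact mul_nonneg hK.le this
      calc r ^ σ₂ * ‖ftv (B t) ξ' i‖
          = r ^ σ₂ * ‖Complex.exp (-((t * ‖ξ'‖ ^ 2 : ℝ) : ℂ)) * ftv B₀ ξ' i
              + ∫ τ in (0:ℝ)..t, f τ‖ := by rw [hDui]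
        _ ≤ r ^ σ₂ * (‖Complex.exp (-((t * ‖ξ'‖ ^ 2 : ℝ) : ℂ)) * ftv B₀ ξ' i‖
              + ‖∫ τ in (0:ℝ)..t, f τ‖) :=
            mul_le_mul_of_nonneg_left (norm_add_le _ _) hrp
        _ = r ^ σ₂ * ‖Complex.exp (-((t * ‖ξ'‖ ^ 2 : ℝ) : ℂ)) * ftv B₀ ξ' i‖
              + r ^ σ₂ * ‖∫ τ in (0:ℝ)..t, f τ‖ := by ring
        _ ≤ M + K * (2*C₁ + 6*C₂) := add_le_add ht1 ht2
        _ = m := hmdef.symm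
    -- from components to the full vector
    rcases hrp.eq_or_lt with h | h
    · rw [← h, zero_mul]
      linarith
    · have hcoord : ∀ i : Fin 3, ‖ftv (B t) ξ' i‖ ≤ m / r ^ σ₂ := by
        intro i
        rw [le_div_iff₀ h]
        calc ‖ftv (B t) ξ' i‖ * r ^ σ₂ = r ^ σ₂ * ‖ftv (B t) ξ' i‖ := by ring
          _ ≤ m := comp_bound i
      have hv := euclid_norm_le_two_mul hcoord
      calc r ^ σ₂ * ‖ftv (B t) ξ'‖ ≤ r ^ σ₂ * (2 * (m / r ^ σ₂)) :=
            mul_le_mul_of_nonneg_left hv hrp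
        _ = 2 * m := by field_simp
  -- pass from a.e. to everywhere
  by_cases hξ : ξ = 0 ∧ σ₂ ≠ 0
  · rw [hξ.1, norm_zero, Real.zero_rpow hξ.2, zero_mul]
    linarith
  · push_neg at hξ
    refine ae_bound_to_forall hae ξ ?_
    have hnorm_cont : ContinuousAt (fun ξ' : EuclideanSpace ℝ (Fin 3) => ‖ξ'‖ ^ σ₂) ξ := by
      have h1 : ContinuousAt (fun y : ℝ => y ^ σ₂) ‖ξ‖ := by
        apply Real.continuousAt_rpow_const
        by_cases h0 : ξ = 0
        · exact Or.inr (le_of_eq (hξ h0).symm)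
        · exact Or.inl (norm_ne_zero_iff.mpr h0)
      exact h1.comp continuous_norm.continuousAt
    exact hnorm_cont.mul ((ftv_continuous (B t)).norm.continuousAt)
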